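/- arXiv:2012.13438 — 3 statements merged into one kernel-verified Lean document; each statement's English description precedes it below -/
import Mathlib

section
/- In ℓ₁, for distinct indices i ≠ j and any fixed finitely supported vectors t and g in ℓ₁, the elementary tensors x_i = e_i ⊗ t ⊗ g and x_j = e_j ⊗ t ⊗ g in the injective tensor product ℓ₁ ⊗ε ℓ₁ ⊗ε ℓ₁ satisfy ‖x_i − x_j‖ ≥ ‖t‖₁ · ‖g‖₁. -/
noncomputable abbrev ell1 : Type := lp (fun _ : ℕ => ℝ) 1

/-- The canonical image of the elementary tensor `x ⊗ y` in `B(X*, Y)`;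
the operator norm of sums of such operators is the injective tensor norm. -/
noncomputable def tensorElem {X Y : Type*} [NormedAddCommGroup X] [NormedSpace ℝ X]
    [NormedAddCommGroup Y] [NormedSpace ℝ Y] (x : X) (y : Y) :
    StrongDual ℝ X →L[ℝ] Y :=
  (NormedSpace.inclusionInDoubleDual ℝ X x).smulRight y

noncomputable instance : AddCommGroup (StrongDual ℝ ell1 →L[ℝ] ell1) :=
  ContinuousLinearMap.addCommGroup

instance : ContinuousAdd (StrongDual ℝ ell1 →L[ℝ] ell1) :=
  ContinuousLinearMap.topologicalAddGroup.toContinuousAdd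

/-- `ℓ₁ ⊗̂ε ℓ₁`, realized as the closed span of the elementary tensors in `B(ℓ₁*, ℓ₁)`. -/
noncomputable def epsTensor2 : Submodule ℝ (StrongDual ℝ ell1 →L[ℝ] ell1) :=
  (Submodule.span ℝ {T | ∃ x y : ell1, T = tensorElem x y}).topologicalClosure

instance : ContinuousAdd (StrongDual ℝ ell1 →L[ℝ] (StrongDual ℝ ell1 →L[ℝ] ell1)) :=
  ContinuousLinearMap.topologicalAddGroup.toContinuousAdd

/-- `ℓ₁ ⊗̂ε ℓ₁ ⊗̂ε ℓ₁`, realized as the closed span of elementary tensors in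
`B(ℓ₁*, B(ℓ₁*, ℓ₁))`. -/
noncomputable def epsTensor3 :
    Submodule ℝ (StrongDual ℝ ell1 →L[ℝ] (StrongDual ℝ ell1 →L[ℝ] ell1)) :=
  (Submodule.span ℝ {T | ∃ x y z : ell1, T = tensorElem x (tensorElem y z)}).topologicalClosure

noncomputable def e1 (i : ℕ) : ell1 := lp.single 1 i (1 : ℝ)


/-- Finite-sum of coordinates of an `ℓ₁` vector against finitely many coefficients,
as a linear map. -/
noncomputable def finFunctionalAux (s : Finset ℕ) (a : ℕ → ℝ) : ell1 →ₗ[ℝ] ℝ where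
  toFun x := ∑ m ∈ s, a m * x m
  map_add' x y := by
    simp [mul_add, Finset.sum_add_distrib]
  map_smul' c x := by
    simp [Finset.mul_sum]
    ring_nf
    exact Finset.sum_congr rfl fun m _ => by ring

lemma sum_abs_le_norm (x : ell1) (s : Finset ℕ) : ∑ m ∈ s, |x m| ≤ ‖x‖ := by
  have := lp.sum_rpow_le_norm_rpow (p := (1 : ENNReal)) (E := fun _ : ℕ => ℝ)
    (by norm_num) x s
  simpa [Real.norm_eq_abs] using this

/-- The corresponding continuous linear functional, when `|a m| ≤ 1` for all `m`. -/
noncomputable def finFunctional (s : Finset ℕ) (a : ℕ → ℝ) (ha : ∀ m, |a m| ≤ 1) :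
    StrongDual ℝ ell1 :=
  LinearMap.mkContinuous (finFunctionalAux s a) 1 (fun x => by
    calc ‖∑ m ∈ s, a m * x m‖ ≤ ∑ m ∈ s, ‖a m * x m‖ := norm_sum_le _ _
      _ ≤ ∑ m ∈ s, |x m| := by
          refine Finset.sum_le_sum fun m _ => ?_
          rw [Real.norm_eq_abs, abs_mul]
          exact mul_le_of_le_one_left (abs_nonneg _) (ha m)
      _ ≤ ‖x‖ := sum_abs_le_norm x s
      _ = 1 * ‖x‖ := (one_mul _).symm)

@[simp] lemma finFunctional_apply (s : Finset ℕ) (a : ℕ → ℝ) (ha : ∀ m, |a m| ≤ 1)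
    (x : ell1) : finFunctional s a ha x = ∑ m ∈ s, a m * x m := rfl

lemma finFunctional_norm_le (s : Finset ℕ) (a : ℕ → ℝ) (ha : ∀ m, |a m| ≤ 1) :
    ‖finFunctional s a ha‖ ≤ 1 :=
  LinearMap.mkContinuous_norm_le _ zero_le_one _

lemma norm_eq_sum_support (t : ell1)
    (ht : (Function.support fun m => (t : ∀ _ : ℕ, ℝ) m).Finite) :
    ‖t‖ = ∑ m ∈ ht.toFinset, |t m| := by
  have h1 : ‖t‖ = ∑' m, |t m| := by
    have := lp.norm_eq_tsum_rpow (p := (1 : ENNReal)) (E := fun _ : ℕ => ℝ)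
      (by norm_num) t
    simpa [Real.norm_eq_abs] using this
  rw [h1]
  refine tsum_eq_sum fun m hm => ?_
  have : t m = 0 := by
    by_contra h
    exact hm (ht.mem_toFinset.2 h)
  simp [this]

theorem stmt6 (i j : ℕ) (hij : i ≠ j) (t g : ell1)
    (ht : (Function.support fun m => (t : ∀ _ : ℕ, ℝ) m).Finite)
    (hg : (Function.support fun m => (g : ∀ _ : ℕ, ℝ) m).Finite) :
    ‖t‖ * ‖g‖ ≤
      ‖tensorElem (e1 i) (tensorElem t g) - tensorElem (e1 j) (tensorElem t g)‖ := by
  classical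
  -- the sign functional attaining the norm of `t`
  set a : ℕ → ℝ := fun m => if 0 ≤ t m then 1 else -1 with ha_def
  have ha : ∀ m, |a m| ≤ 1 := fun m => by
    simp only [ha_def]; split_ifs <;> simp
  set F : StrongDual ℝ ell1 := finFunctional ht.toFinset a ha with hF_def
  have hFt : F t = ‖t‖ := by
    rw [hF_def, finFunctional_apply, norm_eq_sum_support t ht]
    refine Finset.sum_congr rfl fun m _ => ?_
    simp only [ha_def]
    split_ifs with h
    · rw [one_mul, abs_of_nonneg h]
    · rw [neg_one_mul, abs_of_neg (lt_of_not_ge h)]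
  -- the coordinate functional at `i`
  set fi : StrongDual ℝ ell1 := finFunctional {i} (fun _ => 1)
    (fun _ => by norm_num) with hfi_def
  have hfii : fi (e1 i) = 1 := by
    simp [hfi_def, e1, lp.single_apply_self]
  have hfij : fi (e1 j) = 0 := by
    have : lp.single (E := fun _ : ℕ => ℝ) 1 j (1 : ℝ) i = 0 :=
      lp.single_apply_ne (E := fun _ : ℕ => ℝ) 1 j (1 : ℝ) hij
    simp [hfi_def, e1, this, Ne.symm hij]
  set T := tensorElem (e1 i) (tensorElem t g) - tensorElem (e1 j) (tensorElem t g) with hT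
  have h1 : T fi = tensorElem t g := by
    simp [hT, tensorElem, ContinuousLinearMap.sub_apply,
      ContinuousLinearMap.smulRight_apply, NormedSpace.dual_def, hfii, hfij]
  have h2 : (tensorElem t g) F = ‖t‖ • g := by
    simp [tensorElem, ContinuousLinearMap.smulRight_apply, NormedSpace.dual_def, hFt]
  calc ‖t‖ * ‖g‖ = ‖(tensorElem t g) F‖ := by
        rw [h2, norm_smul, Real.norm_eq_abs, abs_of_nonneg (norm_nonneg t)]
    _ ≤ ‖tensorElem t g‖ * ‖F‖ := ContinuousLinearMap.le_opNorm _ _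
    _ ≤ ‖tensorElem t g‖ * 1 := by
        exact mul_le_mul_of_nonneg_left (finFunctional_norm_le _ _ _) (ContinuousLinearMap.opNorm_nonneg _)
    _ = ‖T fi‖ := by rw [mul_one, h1]
    _ ≤ ‖T‖ * ‖fi‖ := ContinuousLinearMap.le_opNorm _ _
    _ ≤ ‖T‖ * 1 := by
        exact mul_le_mul_of_nonneg_left (finFunctional_norm_le _ _ _) (ContinuousLinearMap.opNorm_nonneg _)
    _ = ‖T‖ := mul_one _
end

section
/- Suppose a Banach space X admits a sequence of finite-dimensional subspaces (F_k)_{k≥1} whose union spans a dense subspace and a constant a > 0 such that for any 0 = q_0 < q_1 < … < q_n and any vectors y_i ∈ span{F_j : q_{i−1} < j ≤ q_i} (1 ≤ i ≤ n), one has a²‖Σ_{i=1}^n y_i‖² ≥ Σ_{i=1}^n ‖y_i‖². Then sup_n δ_n(X) ≤ a. -/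
open scoped BigOperators
open Filter

/-- Interleaved indices `i₁ < j₁ < i₂ < j₂ < …`. -/
def Interleaved {n : ℕ} (i j : Fin n → ℕ) : Prop :=
  (∀ k, i k < j k) ∧ ∀ (k : Fin n) (h : k.1 + 1 < n), j k < i ⟨k.1 + 1, h⟩

def IsBoundedArray {X : Type*} [NormedAddCommGroup X] {n : ℕ} (x : Fin n → ℕ → X) : Prop :=
  ∃ M : ℝ, ∀ k i, ‖x k i‖ ≤ M

def IsSeparatedArray {X : Type*} [NormedAddCommGroup X] {n : ℕ} (C : ℝ)
    (x : Fin n → ℕ → X) : Prop :=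
  ∀ k i j, i ≠ j → C ≤ ‖x k i - x k j‖

/-- `δ_n(X)`. -/
noncomputable def deltaN (X : Type*) [NormedAddCommGroup X] (n : ℕ) : ℝ :=
  sInf {d : ℝ | 0 < d ∧ ∀ C > (0:ℝ), ∀ x : Fin n → ℕ → X, IsBoundedArray x →
    IsSeparatedArray C x → ∃ i j : Fin n → ℕ, Interleaved i j ∧
      C * Real.sqrt n ≤ d * ‖∑ k, (x k (i k) - x k (j k))‖}

/-- In a finite-dimensional space, a bounded sequence has two far-out close terms. -/
lemma aux_subseq {V : Type*} [NormedAddCommGroup V] [NormedSpace ℝ V]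
    [FiniteDimensional ℝ V] (u : ℕ → V) (M : ℝ) (hu : ∀ i, ‖u i‖ ≤ M) (N : ℕ)
    {η : ℝ} (hη : 0 < η) : ∃ i j : ℕ, N ≤ i ∧ i < j ∧ ‖u i - u j‖ ≤ η := by
  obtain ⟨L, -, φ, hφ, hconv⟩ := tendsto_subseq_of_bounded
    (Metric.isBounded_closedBall (x := (0 : V)) (r := M))
    (fun i => mem_closedBall_zero_iff.2 (hu i))
  rw [Metric.tendsto_atTop] at hconv
  obtain ⟨P, hP⟩ := hconv (η / 2) (by positivity)
  refine ⟨φ (max P N), φ (max P N + 1), le_trans (le_max_right P N) (hφ.id_le _),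
    hφ (Nat.lt_succ_self _), ?_⟩
  have h1 := hP (max P N) (le_max_left P N)
  have h2 := hP (max P N + 1) (le_trans (le_max_left P N) (Nat.le_succ _))
  have : dist (u (φ (max P N))) (u (φ (max P N + 1))) ≤ η := by
    calc dist (u (φ (max P N))) (u (φ (max P N + 1)))
        ≤ dist (u (φ (max P N))) L + dist (u (φ (max P N + 1))) L := dist_triangle_right _ _ _
      _ ≤ η / 2 + η / 2 := add_le_add (le_of_lt h1) (le_of_lt h2)
      _ = η := by ring
  rwa [dist_eq_norm] at this

/-- Membership in the sup over a tail gives membership in a finite block. -/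
lemma mem_block {X : Type*} [NormedAddCommGroup X] [NormedSpace ℝ X]
    (F : ℕ → Subspace ℝ X) (q : ℕ) {z : X}
    (hz : z ∈ (⨆ l ∈ Set.Ioi q, F l : Subspace ℝ X)) :
    ∃ q', q < q' ∧ z ∈ (⨆ l ∈ Set.Ioc q q', F l : Subspace ℝ X) := by
  set D : ℕ → Subspace ℝ X := fun m => ⨆ l ∈ Set.Ioc q (q + m), F l with hD
  have hmono : Monotone D := fun m m' h =>
    biSup_mono (f := F) (fun l (hl : l ∈ Set.Ioc q (q + m)) =>
      (⟨hl.1, hl.2.trans (by omega)⟩ : l ∈ Set.Ioc q (q + m')))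
  have heq : (⨆ l ∈ Set.Ioi q, F l : Subspace ℝ X) = ⨆ m, D m := by
    apply le_antisymm
    · refine iSup₂_le fun l hl => ?_
      have h1 : F l ≤ D (l - q) := by
        have hl' : l ∈ Set.Ioc q (q + (l - q)) := ⟨hl, by omega⟩
        exact le_iSup₂ (f := fun l' (_ : l' ∈ Set.Ioc q (q + (l - q))) => F l') l hl'
      exact h1.trans (le_iSup D (l - q))
    · exact iSup_le fun m => iSup₂_le fun l hl =>
        le_iSup₂ (f := fun l' (_ : l' ∈ Set.Ioi q) => F l') l hl.1
  rw [heq, Submodule.mem_iSup_of_directed _ hmono.directed_le] at hz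
  obtain ⟨m, hm⟩ := hz
  refine ⟨q + m + 1, by omega, ?_⟩
  exact biSup_mono (f := F) (fun l (hl : l ∈ Set.Ioc q (q + m)) =>
    (⟨hl.1, hl.2.trans (by omega)⟩ : l ∈ Set.Ioc q (q + m + 1))) hm

/-- The quotient by the closed span of a tail is finite-dimensional. -/
lemma quot_fd {X : Type*} [NormedAddCommGroup X] [NormedSpace ℝ X]
    (F : ℕ → Subspace ℝ X) (hfd : ∀ j, FiniteDimensional ℝ (F j))
    (hdense : Dense ((⨆ j, F j : Subspace ℝ X) : Set X)) (q : ℕ) :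
    FiniteDimensional ℝ
      (X ⧸ (⨆ l ∈ Set.Ioi q, F l : Subspace ℝ X).topologicalClosure) := by
  set Z := (⨆ l ∈ Set.Ioi q, F l : Subspace ℝ X).topologicalClosure with hZ
  haveI hZc : IsClosed (Z : Set X) := Submodule.isClosed_topologicalClosure _
  set G : Subspace ℝ X := ⨆ l : Fin (q + 1), F l.1 with hG
  haveI : FiniteDimensional ℝ G := by
    haveI : ∀ l : Fin (q + 1), FiniteDimensional ℝ (F l.1) := fun l => hfd _
    infer_instance
  set T : Submodule ℝ (X ⧸ Z) := G.map Z.mkQ with hT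
  haveI : FiniteDimensional ℝ T := Module.Finite.map G Z.mkQ
  have hTc : IsClosed (T : Set (X ⧸ Z)) := Submodule.closed_of_finiteDimensional T
  have hsub : (⨆ j, F j : Subspace ℝ X) ≤ G ⊔ Z := by
    refine iSup_le fun l => ?_
    rcases le_or_gt l q with h | h
    · refine le_sup_of_le_left ?_
      exact le_iSup (fun l' : Fin (q + 1) => F l'.1) ⟨l, by omega⟩
    · refine le_sup_of_le_right ?_
      exact le_trans (le_iSup₂ (f := fun l' (_ : l' ∈ Set.Ioi q) => F l') l h)
        (Submodule.le_topologicalClosure _)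
  have hdT : Dense (T : Set (X ⧸ Z)) := by
    rw [Metric.dense_iff]
    intro y r hr
    obtain ⟨v, rfl⟩ := Submodule.Quotient.mk_surjective Z y
    obtain ⟨w, hw, hdist⟩ := hdense.exists_dist_lt v hr
    have hwT : (Submodule.Quotient.mk w : X ⧸ Z) ∈ T := by
      have hw' : w ∈ G ⊔ Z := hsub hw
      rw [Submodule.mem_sup] at hw'
      obtain ⟨g, hg, z, hz, rfl⟩ := hw'
      have : (Submodule.Quotient.mk (g + z) : X ⧸ Z) = Submodule.Quotient.mk g := by
        rw [Submodule.Quotient.mk_add]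
        rw [(Submodule.Quotient.mk_eq_zero Z).2 hz, add_zero]
      rw [this]
      exact Submodule.mem_map_of_mem hg
    refine ⟨Submodule.Quotient.mk w, ?_, hwT⟩
    rw [Metric.mem_ball, dist_eq_norm, ← Submodule.Quotient.mk_sub]
    refine lt_of_le_of_lt (Submodule.Quotient.norm_mk_le _ _) ?_
    rw [← dist_eq_norm']
    exact hdist
  have hTop : T = ⊤ := by
    apply SetLike.coe_injective
    rw [← hTc.closure_eq, hdT.closure_eq]
    rfl
  haveI : FiniteDimensional ℝ (⊤ : Submodule ℝ (X ⧸ Z)) := hTop ▸ inferInstance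
  exact (Submodule.topEquiv (R := ℝ) (M := X ⧸ Z)).finiteDimensional

lemma step_exists {X : Type*} [NormedAddCommGroup X] [NormedSpace ℝ X]
    (F : ℕ → Subspace ℝ X) (hfd : ∀ j, FiniteDimensional ℝ (F j))
    (hdense : Dense ((⨆ j, F j : Subspace ℝ X) : Set X))
    (u : ℕ → X) (M : ℝ) (hu : ∀ i, ‖u i‖ ≤ M) (t q : ℕ) {η : ℝ} (hη : 0 < η) :
    ∃ (i j q' : ℕ) (z : X), t ≤ i ∧ i < j ∧ q < q' ∧
      z ∈ (⨆ l ∈ Set.Ioc q q', F l : Subspace ℝ X) ∧ ‖u i - u j - z‖ ≤ 3 * η := by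
  set Z := (⨆ l ∈ Set.Ioi q, F l : Subspace ℝ X).topologicalClosure with hZ
  haveI hZc : IsClosed (Z : Set X) := Submodule.isClosed_topologicalClosure _
  haveI : FiniteDimensional ℝ (X ⧸ Z) := quot_fd F hfd hdense q
  set v : ℕ → X ⧸ Z := fun i => Submodule.Quotient.mk (u i) with hv
  have hvb : ∀ i, ‖v i‖ ≤ M :=
    fun i => le_trans (Submodule.Quotient.norm_mk_le _ _) (hu i)
  obtain ⟨i, j, hti, hij, hclose⟩ := aux_subseq v M hvb t hη
  have hvsub : v i - v j = (Submodule.Quotient.mk (u i - u j) : X ⧸ Z) := by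
    rw [Submodule.Quotient.mk_sub]
  obtain ⟨m, hm, hmn⟩ :=
    Submodule.Quotient.norm_mk_lt (Submodule.Quotient.mk (p := Z) (u i - u j)) hη
  have hmn2 : ‖m‖ ≤ 2 * η := by
    have : ‖(Submodule.Quotient.mk (p := Z) (u i - u j))‖ ≤ η := by
      rw [← hvsub]; exact hclose
    linarith
  have hz1 : u i - u j - m ∈ Z := by
    have := (Submodule.Quotient.eq Z).1 hm
    simpa using Z.neg_mem this
  have hz1' : u i - u j - m ∈
      closure ((⨆ l ∈ Set.Ioi q, F l : Subspace ℝ X) : Set X) := by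
    rwa [← Submodule.topologicalClosure_coe]
  obtain ⟨z2, hz2mem, hz2dist⟩ :=
    Metric.mem_closure_iff.1 hz1' η hη
  obtain ⟨q', hq', hz2blk⟩ := mem_block F q hz2mem
  refine ⟨i, j, q', z2, hti, hij, hq', hz2blk, ?_⟩
  have : u i - u j - z2 = m + ((u i - u j - m) - z2) := by abel
  rw [this]
  calc ‖m + ((u i - u j - m) - z2)‖ ≤ ‖m‖ + ‖(u i - u j - m) - z2‖ := norm_add_le _ _
    _ ≤ 2 * η + η := by
        refine add_le_add hmn2 ?_
        rw [← dist_eq_norm]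
        exact le_of_lt hz2dist
    _ = 3 * η := by ring

lemma final_arith {a ε C η n s0 Zn D : ℝ} (ha : 0 < a) (hε : 0 < ε) (hC : 0 < C)
    (hη : 0 ≤ η) (hn0 : 0 ≤ n) (hs1 : 1 ≤ s0)
    (hkey : 3 * η * (a + ε) * (1 + a * n) = ε * C)
    (hZsum : s0 * (C - 3 * η) ≤ a * Zn)
    (hdiffD : Zn - 3 * n * η ≤ D) : C * s0 ≤ (a + ε) * D := by
  have h₁ : s0 * C - 3 * η * (s0 + a * n) ≤ a * D := by
    nlinarith [mul_le_mul_of_nonneg_left hdiffD ha.le]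
  have hb : s0 + a * n ≤ s0 * (1 + a * n) := by
    nlinarith [mul_nonneg (mul_nonneg (sub_nonneg.2 hs1) ha.le) hn0]
  have h₂ : (a + ε) * (3 * η * (s0 + a * n)) ≤ ε * (s0 * C) := by
    calc (a + ε) * (3 * η * (s0 + a * n))
        ≤ (a + ε) * (3 * η * (s0 * (1 + a * n))) := by
          nlinarith [mul_nonneg (by positivity : (0:ℝ) ≤ (a + ε) * (3 * η))
            (sub_nonneg.2 hb)]
      _ = s0 * (3 * η * (a + ε) * (1 + a * n)) := by ring
      _ = s0 * (ε * C) := by rw [hkey]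
      _ = ε * (s0 * C) := by ring
  have h3 : (a + ε) * (s0 * C - 3 * η * (s0 + a * n)) ≤ (a + ε) * (a * D) :=
    mul_le_mul_of_nonneg_left h₁ (by positivity)
  have h4 : a * (C * s0) ≤ a * ((a + ε) * D) := by nlinarith
  exact le_of_mul_le_mul_left h4 ha

theorem stmt7 (X : Type*) [NormedAddCommGroup X] [NormedSpace ℝ X] [CompleteSpace X]
    (F : ℕ → Subspace ℝ X) (hfd : ∀ j, FiniteDimensional ℝ (F j))
    (hdense : Dense ((⨆ j, F j : Subspace ℝ X) : Set X)) (a : ℝ) (ha : 0 < a)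
    (hest : ∀ (n : ℕ) (q : ℕ → ℕ), q 0 = 0 → StrictMono q →
      ∀ y : Fin n → X,
        (∀ i : Fin n, y i ∈ ⨆ j ∈ Set.Ioc (q i.1) (q (i.1 + 1)), F j) →
        ∑ i, ‖y i‖ ^ 2 ≤ a ^ 2 * ‖∑ i, y i‖ ^ 2) :
    ∀ n : ℕ, deltaN X n ≤ a := by
  intro n
  refine le_of_forall_pos_le_add fun ε hε => ?_
  refine csInf_le ⟨0, fun d hd => le_of_lt hd.1⟩ ?_
  refine ⟨by positivity, fun C hC x hbdd hsep => ?_⟩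
  obtain ⟨M, hM⟩ := hbdd
  rcases Nat.eq_zero_or_pos n with hn | hn
  · subst hn
    exact ⟨fun k => 0, fun k => 0, ⟨fun k => k.elim0, fun k => k.elim0⟩, by simp⟩
  -- the perturbation parameter
  set η := ε * C / (3 * (a + ε) * (1 + a * n)) with hη_def
  have hη : 0 < η := by positivity
  have hn1 : (1 : ℝ) ≤ (n : ℝ) := by exact_mod_cast hn
  have h3η : 3 * η ≤ C := by
    have hden : (0:ℝ) < 3 * (a + ε) * (1 + a * ↑n) := by positivity
    rw [hη_def, show 3 * (ε * C / (3 * (a + ε) * (1 + a * ↑n)))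
        = 3 * (ε * C) / (3 * (a + ε) * (1 + a * ↑n)) from by ring,
      div_le_iff₀ hden]
    nlinarith [mul_pos hC ha, mul_nonneg (mul_nonneg hC.le (mul_nonneg ha.le ha.le))
      (by positivity : (0:ℝ) ≤ (n:ℝ)),
      mul_nonneg (mul_nonneg hC.le (mul_nonneg hε.le ha.le))
      (by positivity : (0:ℝ) ≤ (n:ℝ))]
  -- rows indexed by all of ℕ
  set u : ℕ → ℕ → X := fun k => x ⟨k % n, Nat.mod_lt k hn⟩ with hu_def
  have hu : ∀ k i, ‖u k i‖ ≤ M := fun k i => hM _ i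
  have step : ∀ (k t q : ℕ), ∃ (i j q' : ℕ) (z : X), t ≤ i ∧ i < j ∧ q < q' ∧
      z ∈ (⨆ l ∈ Set.Ioc q q', F l : Subspace ℝ X) ∧ ‖u k i - u k j - z‖ ≤ 3 * η :=
    fun k t q => step_exists F hfd hdense (u k) M (hu k) t q hη
  choose I J Q Z h1 h2 h3 h4 h5 using step
  set s : ℕ → ℕ × ℕ := fun m => Nat.rec ((0 : ℕ), (0 : ℕ))
      (fun k p => (J k p.1 p.2 + 1, Q k p.1 p.2)) m with hs_def
  have hs_succ : ∀ k, s (k + 1) = (J k (s k).1 (s k).2 + 1, Q k (s k).1 (s k).2) :=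
    fun k => rfl
  set qq : ℕ → ℕ := fun m => (s m).2 with hqq_def
  have hqq0 : qq 0 = 0 := rfl
  have hqqmono : StrictMono qq := by
    apply strictMono_nat_of_lt_succ
    intro k
    exact h3 k (s k).1 (s k).2
  set iF : Fin n → ℕ := fun k => I k.1 (s k.1).1 (s k.1).2 with hiF
  set jF : Fin n → ℕ := fun k => J k.1 (s k.1).1 (s k.1).2 with hjF
  set zF : Fin n → X := fun k => Z k.1 (s k.1).1 (s k.1).2 with hzF
  have hrow : ∀ k : Fin n, u k.1 = x k := by
    intro k
    have hk : (⟨k.1 % n, Nat.mod_lt k.1 hn⟩ : Fin n) = k := by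
      apply Fin.ext
      simp [Nat.mod_eq_of_lt k.2]
    simp only [hu_def, hk]
  have hinter : Interleaved iF jF := by
    constructor
    · intro k; exact h2 k.1 _ _
    · intro k hk
      have hle : (s (k.1 + 1)).1 ≤ iF ⟨k.1 + 1, hk⟩ := h1 (k.1 + 1) _ _
      have heq : (s (k.1 + 1)).1 = jF k + 1 := rfl
      omega
  have hmem : ∀ k : Fin n, zF k ∈ ⨆ j ∈ Set.Ioc (qq k.1) (qq (k.1 + 1)), F j := by
    intro k
    have := h4 k.1 (s k.1).1 (s k.1).2
    have hq1 : qq k.1 = (s k.1).2 := rfl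
    have hq2 : qq (k.1 + 1) = Q k.1 (s k.1).1 (s k.1).2 := rfl
    rw [hq1, hq2]
    exact this
  have hpert : ∀ k : Fin n, ‖x k (iF k) - x k (jF k) - zF k‖ ≤ 3 * η := by
    intro k
    have := h5 k.1 (s k.1).1 (s k.1).2
    rwa [hrow k] at this
  have hznorm : ∀ k : Fin n, C - 3 * η ≤ ‖zF k‖ := by
    intro k
    have hsep' : C ≤ ‖x k (iF k) - x k (jF k)‖ :=
      hsep k _ _ (Nat.ne_of_lt (h2 k.1 _ _))
    have htri : ‖x k (iF k) - x k (jF k)‖ - ‖zF k‖ ≤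
        ‖x k (iF k) - x k (jF k) - zF k‖ := by
      have := norm_sub_norm_le (x k (iF k) - x k (jF k)) (zF k)
      linarith
    have := hpert k
    linarith
  -- apply the lower estimate
  have hest' := hest n qq hqq0 hqqmono zF hmem
  have hC3 : 0 ≤ C - 3 * η := by linarith
  have hsum1 : (n : ℝ) * (C - 3 * η) ^ 2 ≤ ∑ k, ‖zF k‖ ^ 2 := by
    have : ∀ k ∈ Finset.univ, (C - 3 * η) ^ 2 ≤ ‖zF k‖ ^ 2 := by
      intro k _
      exact pow_le_pow_left₀ hC3 (hznorm k) 2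
    calc (n : ℝ) * (C - 3 * η) ^ 2
        = ∑ _k : Fin n, (C - 3 * η) ^ 2 := by
          rw [Finset.sum_const, Finset.card_univ, Fintype.card_fin, nsmul_eq_mul]
      _ ≤ ∑ k, ‖zF k‖ ^ 2 := Finset.sum_le_sum this
  have hZsum : Real.sqrt n * (C - 3 * η) ≤ a * ‖∑ k, zF k‖ := by
    have h := hsum1.trans hest'
    have h' : ((Real.sqrt n) * (C - 3 * η)) ^ 2 ≤ (a * ‖∑ k, zF k‖) ^ 2 := by
      have h1 : ((Real.sqrt n) * (C - 3 * η)) ^ 2 = (n : ℝ) * (C - 3 * η) ^ 2 := by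
        rw [mul_pow, Real.sq_sqrt (Nat.cast_nonneg n)]
      have h2 : (a * ‖∑ k, zF k‖) ^ 2 = a ^ 2 * ‖∑ k, zF k‖ ^ 2 := by ring
      rw [h1, h2]; exact h
    have hnn1 : 0 ≤ Real.sqrt n * (C - 3 * η) := by positivity
    have hnn2 : 0 ≤ a * ‖∑ k, zF k‖ := by positivity
    nlinarith
  -- from the z-sum to the x-sum
  set D := ‖∑ k, (x k (iF k) - x k (jF k))‖ with hD_def
  have hdiffD : ‖∑ k, zF k‖ - 3 * n * η ≤ D := by
    have hsplit : ‖∑ k, zF k - ∑ k, (x k (iF k) - x k (jF k))‖ ≤ 3 * n * η := by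
      have : ∑ k, zF k - ∑ k, (x k (iF k) - x k (jF k))
          = ∑ k, (zF k - (x k (iF k) - x k (jF k))) := (Finset.sum_sub_distrib ..).symm
      rw [this]
      calc ‖∑ k, (zF k - (x k (iF k) - x k (jF k)))‖
          ≤ ∑ k, ‖zF k - (x k (iF k) - x k (jF k))‖ := norm_sum_le _ _
        _ ≤ ∑ _k : Fin n, 3 * η := by
            refine Finset.sum_le_sum fun k _ => ?_
            rw [norm_sub_rev]
            exact hpert k
        _ = 3 * n * η := by
            rw [Finset.sum_const, Finset.card_univ, Fintype.card_fin, nsmul_eq_mul]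
            ring
    have := norm_sub_norm_le (∑ k, zF k) (∑ k, (x k (iF k) - x k (jF k)))
    rw [hD_def]
    linarith
  refine ⟨iF, jF, hinter, ?_⟩
  have hs1 : (1 : ℝ) ≤ Real.sqrt n := by
    rw [show (1 : ℝ) = Real.sqrt 1 by rw [Real.sqrt_one]]
    exact Real.sqrt_le_sqrt hn1
  have hkey : 3 * η * (a + ε) * (1 + a * n) = ε * C := by
    rw [hη_def]
    field_simp
  exact final_arith ha hε hC hη.le (by positivity) hs1 hkey hZsum hdiffD
end

section
/- For every C > 0 and every bounded C-separated n-array (x^k_i) in a Banach space X such that, with respect to a fixed Schauder-type blocking (F_j) satisfying a lower ℓ₂ estimate with constant a, each sequence (x^k_i)_i converges coordinatewise, and for every ε > 0, there exist indices i_1 < j_1 < … < i_n < j_n such that a‖Σ_{k=1}^n (x^k_{i_k} − x^k_{j_k})‖ ≥ (Σ_{k=1}^n ‖x^k_{i_k} − x^k_{j_k}‖²)^{1/2} − ε ≥ C n^{1/2} − ε. -/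
open scoped BigOperators
open Filter

lemma sqrt_add_le' {A B : ℝ} (hA : 0 ≤ A) (hB : 0 ≤ B) :
    Real.sqrt (A + B) ≤ Real.sqrt A + Real.sqrt B := by
  have h1 : A + B ≤ (Real.sqrt A + Real.sqrt B) ^ 2 := by
    have hA' := Real.sq_sqrt hA
    have hB' := Real.sq_sqrt hB
    nlinarith [mul_nonneg (Real.sqrt_nonneg A) (Real.sqrt_nonneg B)]
  calc Real.sqrt (A + B) ≤ Real.sqrt ((Real.sqrt A + Real.sqrt B) ^ 2) :=
        Real.sqrt_le_sqrt h1
    _ = Real.sqrt A + Real.sqrt B :=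
        Real.sqrt_sq (by positivity)

lemma keyLemma {X : Type*} [NormedAddCommGroup X] [NormedSpace ℝ X]
    (F : ℕ → Subspace ℝ X) (hfd : ∀ j, FiniteDimensional ℝ (F j))
    (hdense : Dense ((⨆ j, F j : Subspace ℝ X) : Set X))
    (u : ℕ → X) (M : ℝ) (hu : ∀ i, ‖u i‖ ≤ M)
    (q m : ℕ) (δ : ℝ) (hδ : 0 < δ) :
    ∃ i j N : ℕ, m ≤ i ∧ i < j ∧ q < N ∧
      ∃ z ∈ (⨆ l ∈ Set.Ioc q N, F l), ‖u i - u j - z‖ < δ := by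
  classical
  set Z' : Subspace ℝ X := ⨆ l ∈ Set.Ioi q, F l with hZ'
  set W : Subspace ℝ X := Z'.topologicalClosure with hW
  haveI hWc : IsClosed (W : Set X) := Z'.isClosed_topologicalClosure
  set G : Subspace ℝ X := ⨆ l ∈ Set.Iic q, F l with hG
  haveI : FiniteDimensional ℝ G := by
    rw [hG, iSup_subtype']
    haveI : Finite (Set.Iic q) := Set.finite_Iic q
    infer_instance
  -- the quotient is finite dimensional
  have hmkc : Continuous W.mkQ := by
    refine AddMonoidHomClass.continuous_of_bound W.mkQ 1 (fun v => ?_)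
    simpa using Submodule.Quotient.norm_mk_le W v
  have hsub : (⨆ j, F j : Subspace ℝ X) ≤ G ⊔ Z' := by
    refine iSup_le (fun j => ?_)
    rcases le_or_gt j q with hj | hj
    · exact le_trans (le_iSup₂ (f := fun l (_ : l ∈ Set.Iic q) => F l) j (Set.mem_Iic.mpr hj)) le_sup_left
    · exact le_trans (le_iSup₂ (f := fun l (_ : l ∈ Set.Ioi q) => F l) j (Set.mem_Ioi.mpr hj)) le_sup_right
  set T : Submodule ℝ (X ⧸ W) := Submodule.map W.mkQ G with hT
  haveI : FiniteDimensional ℝ T := Module.Finite.map G W.mkQ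
  have hTtop : T = ⊤ := by
    have hTd : Dense (T : Set (X ⧸ W)) := by
      have himg : W.mkQ '' ((⨆ j, F j : Subspace ℝ X) : Set X) ⊆ (T : Set (X ⧸ W)) := by
        rintro _ ⟨v, hv, rfl⟩
        have hv' : v ∈ G ⊔ Z' := hsub hv
        rw [Submodule.mem_sup] at hv'
        obtain ⟨g, hg, z, hz, rfl⟩ := hv'
        have hz0 : W.mkQ z = 0 := by
          rw [Submodule.mkQ_apply]
          exact (Submodule.Quotient.mk_eq_zero W).mpr (Z'.le_topologicalClosure hz)
        have : W.mkQ (g + z) = W.mkQ g := by rw [map_add, hz0, add_zero]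
        rw [this]
        exact ⟨g, hg, rfl⟩
      refine fun y => ?_
      obtain ⟨v, rfl⟩ := Submodule.mkQ_surjective W y
      have hv : v ∈ closure ((⨆ j, F j : Subspace ℝ X) : Set X) := hdense v
      have : W.mkQ v ∈ closure (W.mkQ '' ((⨆ j, F j : Subspace ℝ X) : Set X)) :=
        image_closure_subset_closure_image hmkc ⟨v, hv, rfl⟩
      exact closure_mono himg this
    have hTc : IsClosed (T : Set (X ⧸ W)) := Submodule.closed_of_finiteDimensional T
    ext y
    simp only [Submodule.mem_top, iff_true]
    have : y ∈ closure (T : Set (X ⧸ W)) := hTd y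
    rwa [hTc.closure_eq] at this
  haveI : FiniteDimensional ℝ (X ⧸ W) := by
    haveI : FiniteDimensional ℝ (⊤ : Submodule ℝ (X ⧸ W)) := hTtop ▸ inferInstance
    exact (Submodule.topEquiv : (⊤ : Submodule ℝ (X ⧸ W)) ≃ₗ[ℝ] (X ⧸ W)).finiteDimensional
  haveI : ProperSpace (X ⧸ W) := FiniteDimensional.proper ℝ (X ⧸ W)
  -- Bolzano–Weierstrass in the quotient
  set v : ℕ → X ⧸ W := fun i => W.mkQ (u i) with hv
  have hvb : ∀ i, v i ∈ Metric.closedBall (0 : X ⧸ W) (max M 0) := by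
    intro i
    rw [Metric.mem_closedBall, dist_zero_right]
    exact le_trans (Submodule.Quotient.norm_mk_le W (u i)) (le_max_of_le_left (hu i))
  obtain ⟨L, -, φ, hφ, hlim⟩ :=
    (isCompact_closedBall (0 : X ⧸ W) (max M 0)).tendsto_subseq hvb
  have h4 : (0:ℝ) < δ/4 := by linarith
  obtain ⟨t0, ht0⟩ := (Metric.tendsto_atTop.mp hlim) (δ/4) h4
  set t1 := max t0 m with ht1
  set i := φ t1 with hi
  set j := φ (t1 + 1) with hj
  have him : m ≤ i := le_trans (le_max_right t0 m) (hφ.le_apply)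
  have hij : i < j := hφ (Nat.lt_succ_self t1)
  have hd1 : dist (v i) L < δ/4 := ht0 t1 (le_max_left t0 m)
  have hd2 : dist (v j) L < δ/4 := ht0 (t1+1) (le_trans (le_max_left t0 m) (Nat.le_succ t1))
  have hq : ‖(Submodule.Quotient.mk (u i - u j) : X ⧸ W)‖ < δ/2 := by
    have : (Submodule.Quotient.mk (u i - u j) : X ⧸ W) = v i - v j := by
      simp [hv, Submodule.mkQ_apply, Submodule.Quotient.mk_sub]
    rw [this]
    calc ‖v i - v j‖ ≤ dist (v i) L + dist (v j) L := by
          rw [dist_eq_norm, dist_eq_norm]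
          calc ‖v i - v j‖ = ‖(v i - L) - (v j - L)‖ := by abel_nf
            _ ≤ ‖v i - L‖ + ‖v j - L‖ := norm_sub_le _ _
      _ < δ/2 := by linarith
  -- pull back to a representative
  have hεq : 0 < δ/2 - ‖(Submodule.Quotient.mk (u i - u j) : X ⧸ W)‖ := by linarith
  obtain ⟨m', hm'eq, hm'⟩ := Submodule.Quotient.norm_mk_lt
    (Submodule.Quotient.mk (u i - u j) : X ⧸ W) hεq
  have hm'n : ‖m'‖ < δ/2 := by linarith
  have hwmem : u i - u j - m' ∈ W := by
    have := (Submodule.Quotient.eq W).mp hm'eq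
    simpa using W.neg_mem this
  -- approximate the W-part by an element of Z'
  have hwcl : (u i - u j - m') ∈ closure (Z' : Set X) := by
    rw [← Submodule.topologicalClosure_coe]
    exact hwmem
  obtain ⟨z, hzZ, hzd⟩ := Metric.mem_closure_iff.mp hwcl (δ/2) (by linarith)
  -- z lies in a finite block
  have hzblock : ∃ N', z ∈ (⨆ l ∈ Set.Ioc q (q + 1 + N'), F l) := by
    have hmono : Monotone (fun N' : ℕ => (⨆ l ∈ Set.Ioc q (q + 1 + N'), F l : Subspace ℝ X)) := by
      intro s t hst
      exact biSup_mono (fun l hl => ⟨hl.1, le_trans hl.2 (by omega)⟩)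
    have hdir : Directed (· ≤ ·) (fun N' : ℕ => (⨆ l ∈ Set.Ioc q (q + 1 + N'), F l : Subspace ℝ X)) :=
      hmono.directed_le
    have hle : Z' ≤ ⨆ N' : ℕ, (⨆ l ∈ Set.Ioc q (q + 1 + N'), F l : Subspace ℝ X) := by
      rw [hZ']
      refine iSup₂_le (fun l hl => ?_)
      have hl' : q < l := hl
      refine le_trans ?_ (le_iSup _ (l - q - 1))
      exact le_iSup₂ (f := fun l' (_ : l' ∈ Set.Ioc q (q + 1 + (l - q - 1))) => F l') l
        ⟨hl', by omega⟩
    have := hle hzZ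
    rwa [Submodule.mem_iSup_of_directed _ hdir] at this
  obtain ⟨N', hzN⟩ := hzblock
  refine ⟨i, j, q + 1 + N', him, hij, by omega, z, hzN, ?_⟩
  have : ‖u i - u j - z‖ ≤ ‖u i - u j - m' - z‖ + ‖m'‖ := by
    calc ‖u i - u j - z‖ = ‖(u i - u j - m' - z) + m'‖ := by abel_nf
      _ ≤ ‖u i - u j - m' - z‖ + ‖m'‖ := norm_add_le _ _
  have hzd' : ‖u i - u j - m' - z‖ < δ/2 := by
    rw [← dist_eq_norm] at *
    exact hzd
  linarith

set_option maxHeartbeats 1000000 in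
theorem stmt9 (X : Type*) [NormedAddCommGroup X] [NormedSpace ℝ X] [CompleteSpace X]
    (F : ℕ → Subspace ℝ X) (hfd : ∀ j, FiniteDimensional ℝ (F j))
    (hdense : Dense ((⨆ j, F j : Subspace ℝ X) : Set X)) (a : ℝ) (ha : 0 < a)
    (hest : ∀ (m : ℕ) (q : ℕ → ℕ), q 0 = 0 → StrictMono q →
      ∀ y : Fin m → X,
        (∀ i : Fin m, y i ∈ ⨆ j ∈ Set.Ioc (q i.1) (q (i.1 + 1)), F j) →
        ∑ i, ‖y i‖ ^ 2 ≤ a ^ 2 * ‖∑ i, y i‖ ^ 2)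
    (f : ℕ → StrongDual ℝ X)
    -- the coordinate functionals of the blocking: they separate points and each is
    -- supported on the corresponding block
    (hsep : ∀ x : X, (∀ m, f m x = 0) → x = 0)
    (n : ℕ) (C : ℝ) (hC : 0 < C) (x : Fin n → ℕ → X)
    (hb : IsBoundedArray x) (hs : IsSeparatedArray C x)
    (hconv : ∀ (k : Fin n) (m : ℕ), ∃ L : ℝ,
      Filter.Tendsto (fun i => f m (x k i)) Filter.atTop (nhds L))
    (ε : ℝ) (hε : 0 < ε) :
    ∃ i j : Fin n → ℕ, Interleaved i j ∧
      (∑ k, ‖x k (i k) - x k (j k)‖ ^ 2) ^ ((1:ℝ)/2) - ε ≤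
        a * ‖∑ k, (x k (i k) - x k (j k))‖ ∧
      C * Real.sqrt n - ε ≤ (∑ k, ‖x k (i k) - x k (j k)‖ ^ 2) ^ ((1:ℝ)/2) := by
  classical
  rcases Nat.eq_zero_or_pos n with hn | npos
  · subst hn
    refine ⟨fun k => 0, fun k => 0, ⟨fun k => k.elim0, fun k => k.elim0⟩, ?_, ?_⟩
    · simp only [Finset.univ_eq_empty, Finset.sum_empty, norm_zero]
      rw [Real.zero_rpow (by norm_num : (1:ℝ)/2 ≠ 0)]
      nlinarith
    · simp only [Finset.univ_eq_empty, Finset.sum_empty, Nat.cast_zero, Real.sqrt_zero]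
      rw [Real.zero_rpow (by norm_num : (1:ℝ)/2 ≠ 0)]
      nlinarith
  obtain ⟨M, hM⟩ := hb
  set M' : ℝ := max M 0 with hM'def
  have hM'0 : 0 ≤ M' := le_max_right M 0
  have hM' : ∀ k i, ‖x k i‖ ≤ M' := fun k i => le_trans (hM k i) (le_max_left M 0)
  set δ : ℝ := min 1 (min ((ε/2)/(a*n+1)) ((ε/2)^2/(n*(4*M'+3)+1))) with hδdef
  have hden1 : (0:ℝ) < a*n+1 := by positivity
  have hden2 : (0:ℝ) < n*(4*M'+3)+1 := by positivity
  have hδ : 0 < δ := by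
    apply lt_min one_pos
    apply lt_min <;> positivity
  have hδ1 : δ ≤ 1 := min_le_left _ _
  have hδ2 : δ * (a*n+1) ≤ ε/2 := by
    have h : δ ≤ (ε/2)/(a*n+1) := le_trans (min_le_right _ _) (min_le_left _ _)
    calc δ * (a*n+1) ≤ ((ε/2)/(a*n+1)) * (a*n+1) := by
          apply mul_le_mul_of_nonneg_right h (le_of_lt hden1)
      _ = ε/2 := div_mul_cancel₀ _ (ne_of_gt hden1)
  have hδ3 : δ * (n*(4*M'+3)+1) ≤ (ε/2)^2 := by
    have h : δ ≤ (ε/2)^2/(n*(4*M'+3)+1) := le_trans (min_le_right _ _) (min_le_right _ _)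
    calc δ * (n*(4*M'+3)+1) ≤ ((ε/2)^2/(n*(4*M'+3)+1)) * (n*(4*M'+3)+1) := by
          apply mul_le_mul_of_nonneg_right h (le_of_lt hden2)
      _ = (ε/2)^2 := div_mul_cancel₀ _ (ne_of_gt hden2)
  set xu : ℕ → ℕ → X := fun k => x ⟨k % n, Nat.mod_lt k npos⟩ with hxudef
  have KL : ∀ k qq mm : ℕ, ∃ p : ℕ × ℕ × ℕ, mm ≤ p.1 ∧ p.1 < p.2.1 ∧ qq < p.2.2 ∧
      ∃ z ∈ (⨆ l ∈ Set.Ioc qq p.2.2, F l), ‖xu k p.1 - xu k p.2.1 - z‖ < δ := by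
    intro k qq mm
    obtain ⟨i, j, N, h1, h2, h3, h4⟩ :=
      keyLemma F hfd hdense (xu k) M' (fun i => hM' _ i) qq mm δ hδ
    exact ⟨(i, j, N), h1, h2, h3, h4⟩
  let g : ℕ → ℕ × ℕ × ℕ := fun k => Nat.rec (motive := fun _ => ℕ × ℕ × ℕ)
    (KL 0 0 0).choose (fun k' prev => (KL (k'+1) prev.2.2 (prev.2.1+1)).choose) k
  let Q : ℕ → ℕ := fun t => Nat.rec (motive := fun _ => ℕ) 0 (fun t' _ => (g t').2.2) t
  have hQ0 : Q 0 = 0 := rfl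
  have hQs : ∀ t, Q (t+1) = (g t).2.2 := fun t => rfl
  have hgall : ∀ k : ℕ, (g k).1 < (g k).2.1 ∧ Q k < Q (k+1) ∧
      (∀ k', k = k'+1 → (g k').2.1 < (g k).1) ∧
      ∃ z ∈ (⨆ l ∈ Set.Ioc (Q k) (Q (k+1)), F l),
        ‖xu k (g k).1 - xu k (g k).2.1 - z‖ < δ := by
    intro k
    cases k with
    | zero =>
      have e : g 0 = (KL 0 0 0).choose := rfl
      obtain ⟨h1, h2, h3, h4⟩ := (KL 0 0 0).choose_spec
      simp only [hQs, hQ0, e]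
      exact ⟨h2, h3, fun k' hk' => absurd hk' (by omega), h4⟩
    | succ k' =>
      have e : g (k'+1) = (KL (k'+1) (g k').2.2 ((g k').2.1+1)).choose := rfl
      obtain ⟨h1, h2, h3, h4⟩ := (KL (k'+1) (g k').2.2 ((g k').2.1+1)).choose_spec
      simp only [hQs, e]
      refine ⟨h2, h3, ?_, h4⟩
      intro k'' hk''
      have hk : k'' = k' := by omega
      subst hk
      omega
  have hQSM : StrictMono Q := strictMono_nat_of_lt_succ (fun t => (hgall t).2.1)
  set ifun : Fin n → ℕ := fun k => (g k.1).1 with hifun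
  set jfun : Fin n → ℕ := fun k => (g k.1).2.1 with hjfun
  have hinter : Interleaved ifun jfun := by
    constructor
    · exact fun k => (hgall k.1).1
    · intro k h
      exact (hgall (k.1+1)).2.2.1 k.1 rfl
  have hxu : ∀ k : Fin n, xu k.1 = x k := by
    intro k
    have hk : (⟨k.1 % n, Nat.mod_lt k.1 npos⟩ : Fin n) = k :=
      Fin.ext (show k.1 % n = k.1 from Nat.mod_eq_of_lt k.2)
    simp only [hxudef]
    rw [hk]
  have hzex : ∀ k : Fin n, ∃ w, w ∈ (⨆ l ∈ Set.Ioc (Q k.1) (Q (k.1+1)), F l) ∧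
      ‖xu k.1 (g k.1).1 - xu k.1 (g k.1).2.1 - w‖ < δ := fun k => (hgall k.1).2.2.2
  choose z hzmem hznorm using hzex
  have hdz : ∀ k : Fin n, ‖(x k (ifun k) - x k (jfun k)) - z k‖ < δ := by
    intro k
    have h := hznorm k
    rw [hxu k] at h
    exact h
  have hest' : ∑ k, ‖z k‖ ^ 2 ≤ a ^ 2 * ‖∑ k, z k‖ ^ 2 :=
    hest n Q hQ0 hQSM z (fun k => hzmem k)
  have hC' : ∀ k : Fin n, C ≤ ‖x k (ifun k) - x k (jfun k)‖ :=
    fun k => hs k _ _ (ne_of_lt (hgall k.1).1)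
  have hdM : ∀ k : Fin n, ‖x k (ifun k) - x k (jfun k)‖ ≤ 2*M' := by
    intro k
    calc ‖x k (ifun k) - x k (jfun k)‖ ≤ ‖x k (ifun k)‖ + ‖x k (jfun k)‖ := norm_sub_le _ _
      _ ≤ 2*M' := by have := hM' k (ifun k); have := hM' k (jfun k); linarith
  have hzM : ∀ k : Fin n, ‖z k‖ ≤ 2*M' + 1 := by
    intro k
    have h1 := hdz k
    have h2 := hdM k
    have : ‖z k‖ ≤ ‖x k (ifun k) - x k (jfun k)‖ + ‖(x k (ifun k) - x k (jfun k)) - z k‖ := by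
      calc ‖z k‖ = ‖(x k (ifun k) - x k (jfun k)) - ((x k (ifun k) - x k (jfun k)) - z k)‖ := by
            congr 1; abel
        _ ≤ _ := norm_sub_le _ _
    linarith
  -- sum of squares comparison
  have hterm : ∀ k : Fin n, ‖x k (ifun k) - x k (jfun k)‖ ^ 2 ≤ ‖z k‖ ^ 2 + δ * (4*M'+3) := by
    intro k
    have h1 := hdz k
    have h2 := hzM k
    have h3 : ‖x k (ifun k) - x k (jfun k)‖ ≤ ‖z k‖ + δ := by
      have : ‖x k (ifun k) - x k (jfun k)‖ ≤ ‖z k‖ + ‖(x k (ifun k) - x k (jfun k)) - z k‖ := by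
        calc ‖x k (ifun k) - x k (jfun k)‖ = ‖z k + ((x k (ifun k) - x k (jfun k)) - z k)‖ := by
              congr 1; abel
          _ ≤ _ := norm_add_le _ _
      linarith
    have hz0 : 0 ≤ ‖z k‖ := norm_nonneg _
    have hd0 : 0 ≤ ‖x k (ifun k) - x k (jfun k)‖ := norm_nonneg _
    nlinarith
  have hST : ∑ k, ‖x k (ifun k) - x k (jfun k)‖ ^ 2 ≤ (∑ k, ‖z k‖ ^ 2) + (ε/2)^2 := by
    calc ∑ k, ‖x k (ifun k) - x k (jfun k)‖ ^ 2 ≤ ∑ k : Fin n, (‖z k‖ ^ 2 + δ * (4*M'+3)) :=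
          Finset.sum_le_sum (fun k _ => hterm k)
      _ = (∑ k, ‖z k‖ ^ 2) + n * (δ * (4*M'+3)) := by
          rw [Finset.sum_add_distrib, Finset.sum_const, Finset.card_univ, Fintype.card_fin,
            nsmul_eq_mul]
      _ ≤ (∑ k, ‖z k‖ ^ 2) + (ε/2)^2 := by
          have : (n:ℝ) * (δ * (4*M'+3)) ≤ δ * (n*(4*M'+3)+1) := by nlinarith
          linarith
  have hTnn : 0 ≤ ∑ k, ‖z k‖ ^ 2 := Finset.sum_nonneg (fun k _ => sq_nonneg _)
  have hsqrtT : Real.sqrt (∑ k, ‖z k‖ ^ 2) ≤ a * ‖∑ k, z k‖ := by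
    have h1 : ∑ k, ‖z k‖ ^ 2 ≤ (a * ‖∑ k, z k‖) ^ 2 := by
      rw [mul_pow]; exact hest'
    calc Real.sqrt (∑ k, ‖z k‖ ^ 2) ≤ Real.sqrt ((a * ‖∑ k, z k‖) ^ 2) := Real.sqrt_le_sqrt h1
      _ = a * ‖∑ k, z k‖ := Real.sqrt_sq (by positivity)
  have hsum_close : ‖∑ k, z k‖ ≤ ‖∑ k, (x k (ifun k) - x k (jfun k))‖ + n * δ := by
    have h1 : ‖∑ k, z k - ∑ k, (x k (ifun k) - x k (jfun k))‖ ≤ n * δ := by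
      rw [← Finset.sum_sub_distrib]
      calc ‖∑ k : Fin n, (z k - (x k (ifun k) - x k (jfun k)))‖
          ≤ ∑ k : Fin n, ‖z k - (x k (ifun k) - x k (jfun k))‖ := norm_sum_le _ _
        _ ≤ ∑ k : Fin n, δ := Finset.sum_le_sum (fun k _ => by
            rw [norm_sub_rev]
            exact le_of_lt (hdz k))
        _ = n * δ := by rw [Finset.sum_const, Finset.card_univ, Fintype.card_fin, nsmul_eq_mul]
    calc ‖∑ k, z k‖
        = ‖(∑ k, (x k (ifun k) - x k (jfun k))) + (∑ k, z k - ∑ k, (x k (ifun k) - x k (jfun k)))‖ := by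
          congr 1; abel
      _ ≤ _ := norm_add_le _ _
      _ ≤ _ := by linarith
  have key1 : Real.sqrt (∑ k, ‖x k (ifun k) - x k (jfun k)‖ ^ 2) ≤
      a * ‖∑ k, (x k (ifun k) - x k (jfun k))‖ + ε := by
    have s1 : Real.sqrt (∑ k, ‖x k (ifun k) - x k (jfun k)‖ ^ 2) ≤
        Real.sqrt (∑ k, ‖z k‖ ^ 2) + ε/2 := by
      calc Real.sqrt (∑ k, ‖x k (ifun k) - x k (jfun k)‖ ^ 2)
          ≤ Real.sqrt ((∑ k, ‖z k‖ ^ 2) + (ε/2)^2) := Real.sqrt_le_sqrt hST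
        _ ≤ Real.sqrt (∑ k, ‖z k‖ ^ 2) + Real.sqrt ((ε/2)^2) :=
            sqrt_add_le' hTnn (sq_nonneg _)
        _ = Real.sqrt (∑ k, ‖z k‖ ^ 2) + ε/2 := by
            rw [Real.sqrt_sq (by linarith)]
    have s2 : a * ‖∑ k, z k‖ ≤ a * ‖∑ k, (x k (ifun k) - x k (jfun k))‖ + ε/2 := by
      have := mul_le_mul_of_nonneg_left hsum_close (le_of_lt ha)
      have h3 : a * (n * δ) ≤ ε/2 := by nlinarith
      nlinarith
    linarith
  have key2 : C * Real.sqrt n ≤ Real.sqrt (∑ k, ‖x k (ifun k) - x k (jfun k)‖ ^ 2) := by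
    have h1 : (n:ℝ) * C^2 ≤ ∑ k, ‖x k (ifun k) - x k (jfun k)‖ ^ 2 := by
      calc (n:ℝ) * C^2 = ∑ _k : Fin n, C^2 := by
            rw [Finset.sum_const, Finset.card_univ, Fintype.card_fin, nsmul_eq_mul]
        _ ≤ _ := Finset.sum_le_sum (fun k _ => by
            have := hC' k
            nlinarith [norm_nonneg (x k (ifun k) - x k (jfun k))])
    calc C * Real.sqrt n = Real.sqrt ((n:ℝ) * C^2) := by
          rw [Real.sqrt_mul (Nat.cast_nonneg n), Real.sqrt_sq (le_of_lt hC)]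
          ring
      _ ≤ _ := Real.sqrt_le_sqrt h1
  refine ⟨ifun, jfun, hinter, ?_, ?_⟩
  · rw [← Real.sqrt_eq_rpow]
    linarith
  · rw [← Real.sqrt_eq_rpow]
    linarith
end
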